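/- The circular universality index of w is at most ι(w) + 1: if w has universality index k, then no conjugate of w is (k+2)-universal. -/

import Mathlib

private def AllL {α : Type*} (b : List α) : Prop := ∀ a : α, a ∈ b

private lemma sublist_flatten {α : Type*} :
    ∀ (L : List (List α)) (u : List α), (∀ b ∈ L, AllL b) → u.length ≤ L.length →
      u.Sublist L.flatten
  | _, [], _, _ => List.nil_sublist _
  | [], _ :: _, _, h => by simp at h
  | b :: L, a :: u, hb, h => by
      simp only [List.flatten_cons]
      exact List.Sublist.append (List.singleton_sublist.2 (hb b (by simp) a))
        (sublist_flatten L u (fun c hc => hb c (by simp [hc])) (by simpa using h))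

private lemma cons_sublist_drop {α : Type*} (c : α) :
    ∀ (A : List α) {u q : List α}, (c :: u).Sublist (A ++ c :: q) → c ∉ A → u.Sublist q
  | [], u, q, h, _ => by
      simpa using (List.cons_sublist_cons.mp h)
  | a :: A, u, q, h, hc => by
      cases h with
      | cons _ h => exact cons_sublist_drop c A h (fun hm => hc (List.mem_cons_of_mem _ hm))
      | cons_cons _ h => exact absurd List.mem_cons_self hc

private lemma exists_blocks {α : Type*} :
    ∀ (m : ℕ) (v : List α), (∀ u : List α, u.length = m → u.Sublist v) →
      ∃ (L : List (List α)) (r : List α),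
        v = L.flatten ++ r ∧ L.length = m ∧ ∀ b ∈ L, AllL b := by
  intro m
  induction m with
  | zero => exact fun v _ => ⟨[], v, by simp, rfl, by simp⟩
  | succ m ih =>
    intro v hv
    by_cases hα : Nonempty α
    · classical
      have hmem : ∀ a : α, a ∈ v := by
        intro a
        have h := hv (List.replicate (m + 1) a) (by simp)
        exact h.subset (by simp)
      have h0 : ∃ n, ∀ a : α, a ∈ v.take n :=
        ⟨v.length, by simpa using hmem⟩
      obtain ⟨n', hn'⟩ : ∃ n', Nat.find h0 = n' + 1 := by
        refine ⟨Nat.find h0 - 1, ?_⟩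
        have hpos : Nat.find h0 ≠ 0 := by
          intro h
          obtain ⟨a⟩ := hα
          have := Nat.find_spec h0 a
          rw [h] at this
          simp at this
        omega
      have hn : ∀ a : α, a ∈ v.take (n' + 1) := by
        rw [← hn']; exact Nat.find_spec h0
      have hnle : n' + 1 ≤ v.length := by
        rw [← hn']; exact Nat.find_min' h0 (by simpa using hmem)
      have hlt : ¬ ∀ a : α, a ∈ v.take n' := by
        have := Nat.find_min h0 (m := n') (by omega)
        simpa using this
      obtain ⟨c, hc⟩ := not_forall.mp hlt
      set A := v.take n' with hA
      have hdrop : n' < v.length := by omega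
      have hd : v.drop n' = v[n'] :: v.drop (n' + 1) := List.drop_eq_getElem_cons hdrop
      obtain ⟨e, he⟩ : ∃ e, e = v[n'] := ⟨_, rfl⟩
      rw [← he] at hd
      set q := v.drop (n' + 1) with hq
      have hv_eq : v = A ++ e :: q := by
        conv_lhs => rw [← List.take_append_drop n' v, hd]
      have htaken : v.take (n' + 1) = A ++ [e] := by
        rw [List.take_add, hd]
        simp [hA]
      have hce : c = e := by
        have := hn c
        rw [htaken] at this
        rcases List.mem_append.mp this with h | h
        · exact absurd h hc
        · simpa using h
      rw [hce] at hc
      have huq : ∀ u : List α, u.length = m → u.Sublist q := by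
        intro u hu
        have h := hv (e :: u) (by simp [hu])
        rw [hv_eq] at h
        exact cons_sublist_drop _ A h hc
      obtain ⟨L, r, hflatten, hlen, hall⟩ := ih q huq
      refine ⟨(A ++ [e]) :: L, r, ?_, by simp [hlen], ?_⟩
      · rw [hv_eq, hflatten]
        simp
      · intro b hb
        rcases List.mem_cons.mp hb with h | h
        · subst h
          intro a
          have := hn a
          rw [htaken] at this
          exact this
        · exact hall b h
    · refine ⟨List.replicate (m + 1) [], v, by simp, by simp, ?_⟩
      intro b _ a
      exact absurd ⟨a⟩ hα

private lemma split_blocks {α : Type*} :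
    ∀ (L : List (List α)) (r y x : List α), y ++ x = L.flatten ++ r →
      ∃ L₁ L₂ : List (List α), (∀ b ∈ L₁, b ∈ L) ∧ (∀ b ∈ L₂, b ∈ L) ∧
        L₁.flatten.Sublist y ∧ L₂.flatten.Sublist x ∧ L.length ≤ L₁.length + L₂.length + 1
  | [], r, y, x, _ => ⟨[], [], by simp, by simp, List.nil_sublist _, List.nil_sublist _, by simp⟩
  | b :: L, r, y, x, h => by
      rw [List.flatten_cons, List.append_assoc] at h
      rcases List.append_eq_append_iff.mp h with ⟨y', hb, hx⟩ | ⟨b', hy, hrest⟩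
      · -- b = y ++ y', x = y' ++ (L.flatten ++ r)
        refine ⟨[], L, by simp, fun c hc => by simp [hc], List.nil_sublist _, ?_, by simp⟩
        rw [hx]
        exact (List.sublist_append_right _ _).trans
          (by rw [← List.append_assoc]; exact List.sublist_append_left _ _)
      · -- y = b ++ b', b' ++ x = L.flatten ++ r
        obtain ⟨L₁, L₂, hm1, hm2, hs1, hs2, hlen⟩ := split_blocks L r b' x hrest.symm
        refine ⟨b :: L₁, L₂, ?_, fun c hc => List.mem_cons_of_mem _ (hm2 c hc), ?_, hs2, ?_⟩
        · intro c hc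
          rcases List.mem_cons.mp hc with h' | h'
          · simp [h']
          · exact List.mem_cons_of_mem _ (hm1 c h')
        · rw [hy, List.flatten_cons]
          exact (List.Sublist.refl b).append hs1
        · simp only [List.length_cons]
          omega

/-- If w has universality index k (w is k-universal but not (k+1)-universal),
then no conjugate of w is (k+2)-universal. -/
theorem conjugate_not_universal {α : Type*} (w : List α) (k : ℕ)
    (hk : ∀ u : List α, u.length = k → u.Sublist w)
    (hk1 : ¬ ∀ u : List α, u.length = k + 1 → u.Sublist w) :
    ∀ x y : List α, w = x ++ y →
      ¬ ∀ u : List α, u.length = k + 2 → u.Sublist (y ++ x) := by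
  intro x y hw huniv
  push_neg at hk1
  obtain ⟨u, hu, hnu⟩ := hk1
  apply hnu
  obtain ⟨L, r, hflatten, hlen, hall⟩ := exists_blocks (k + 2) (y ++ x) huniv
  obtain ⟨L₁, L₂, hm1, hm2, hs1, hs2, hlen'⟩ := split_blocks L r y x hflatten
  have hsub : u.Sublist ((L₂ ++ L₁).flatten) := by
    apply sublist_flatten
    · intro b hb
      rcases List.mem_append.mp hb with h | h
      · exact hall b (hm2 b h)
      · exact hall b (hm1 b h)
    · simp only [List.length_append]
      omega
  rw [hw]
  refine hsub.trans ?_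
  rw [List.flatten_append]
  exact hs2.append hs1
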